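/- Vanishing of the weighted gradient at the degenerate point: if u ∈ H²_{1/σ}(0,1) (i.e., u ∈ H¹_{1/σ} with Au = σ(ηu')' ∈ L²_{1/σ}) and K₁ ≤ 1, then lim_{x→0⁺} x (u'(x))² = 0. -/

import Mathlib

open Set MeasureTheory Filter Topology

/-- if `u ∈ H²_{1/σ}(0,1)` (i.e. `u ∈ H¹_{1/σ}` with
`A u = σ (η u')' ∈ L²_{1/σ}`) and `K₁ ≤ 1`, then
`lim_{x→0⁺} x (u'(x))² = 0`. -/
theorem statement18 (a b d : ℝ → ℝ) (K₁ K₂ : ℝ)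
    (ha_cont : ContinuousOn a (Icc 0 1)) (hb_cont : ContinuousOn b (Icc 0 1))
    (hd_cont : ContinuousOn d (Icc 0 1))
    (ha0 : a 0 = 0) (hd0 : d 0 = 0)
    (ha_pos : ∀ x ∈ Ioc (0:ℝ) 1, 0 < a x)
    (hd_pos : ∀ x ∈ Ioc (0:ℝ) 1, 0 < d x)
    (hba : IntegrableOn (fun x => b x / a x) (Ioo 0 1))
    (hK₁ : K₁ ∈ Ioo (0:ℝ) 2) (hK₂ : K₂ ∈ Ioo (0:ℝ) 2) (hsum : K₁ + K₂ ≤ 2)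
    (hK₁1 : K₁ ≤ 1)
    (hmona : ∃ δ > 0, MonotoneOn (fun x : ℝ => x ^ K₁ / a x) (Ioo (0:ℝ) δ))
    (hmond : ∃ δ > 0, MonotoneOn (fun x : ℝ => x ^ K₂ / d x) (Ioo (0:ℝ) δ))
    (η σ : ℝ → ℝ)
    (hη : ∀ x, η x = Real.exp (∫ s in (1/2:ℝ)..x, b s / a s))
    (hσ : ∀ x, σ x = a x / η x)
    -- `u ∈ H²_{1/σ}(0,1)`, with `(η u')' = w`, so `A u = σ w ∈ L²_{1/σ}`
    (u u' w : ℝ → ℝ)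
    (hu : ∀ x ∈ Ioo (0:ℝ) 1, HasDerivAt u (u' x) x)
    (hu_cont : ContinuousOn u (Icc 0 1)) (hu0 : u 0 = 0) (hu1 : u 1 = 0)
    (hu'L2 : IntegrableOn (fun x => u' x ^ 2) (Ioo 0 1))
    (huL2σ : IntegrableOn (fun x => u x ^ 2 / σ x) (Ioo 0 1))
    (hw : ∀ x ∈ Ioo (0:ℝ) 1, HasDerivAt (fun t => η t * u' t) (w x) x)
    (hAu : IntegrableOn (fun x => (σ x * w x) ^ 2 / σ x) (Ioo 0 1)) :
    Tendsto (fun x : ℝ => x * u' x ^ 2) (nhdsWithin 0 (Ioi 0)) (nhds 0) := by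
  obtain ⟨δ, hδpos, hmon⟩ := hmona
  have hηpos : ∀ x, 0 < η x := fun x => by rw [hη]; exact Real.exp_pos _
  set S : Set ℝ := Ioo (0:ℝ) 1 with hS
  have haS : ∀ x ∈ S, 0 < a x := fun x hx => ha_pos x ⟨hx.1, hx.2.le⟩
  -- bound for η on S
  set M : ℝ := ∫ x in Ioo (0:ℝ) 1, |b x / a x| with hM
  have hint_abs : IntegrableOn (fun x => |b x / a x|) (Ioo (0:ℝ) 1) := hba.abs
  have hsubΙ : ∀ x ∈ S, uIoc (1/2:ℝ) x ⊆ Ioo (0:ℝ) 1 := by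
    intro x hx t ht
    constructor
    · exact lt_of_lt_of_le (lt_min (by norm_num) hx.1) ht.1.le
    · exact lt_of_le_of_lt ht.2 (max_lt (by norm_num) hx.2)
  have hFbound : ∀ x ∈ S, |∫ s in (1/2:ℝ)..x, b s / a s| ≤ M := by
    intro x hx
    calc |∫ s in (1/2:ℝ)..x, b s / a s| ≤ ∫ s in uIoc (1/2:ℝ) x, |b s / a s| := by
          simpa only [Real.norm_eq_abs] using
            intervalIntegral.norm_integral_le_integral_norm_uIoc
              (a := (1/2:ℝ)) (b := x) (f := fun s => b s / a s) (μ := volume)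
      _ ≤ M := by
          refine setIntegral_mono_set hint_abs ?_ ?_
          · exact ae_of_all _ fun t => abs_nonneg _
          · exact HasSubset.Subset.eventuallyLE (hsubΙ x hx)
  have hηle : ∀ x ∈ S, η x ≤ Real.exp M := by
    intro x hx
    rw [hη]
    exact Real.exp_le_exp.2 ((le_abs_self _).trans (hFbound x hx))
  have hηge : ∀ x ∈ S, Real.exp (-M) ≤ η x := by
    intro x hx
    rw [hη]
    exact Real.exp_le_exp.2 (neg_le_of_abs_le (hFbound x hx))
  -- continuity and derivatives on S
  have hbaS : ContinuousOn (fun x => b x / a x) S :=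
    (hb_cont.mono Ioo_subset_Icc_self).div (ha_cont.mono Ioo_subset_Icc_self)
      (fun x hx => (haS x hx).ne')
  have hSopen : IsOpen S := isOpen_Ioo
  have hSnhds : ∀ x ∈ S, S ∈ 𝓝 x := fun x hx => hSopen.mem_nhds hx
  have hηd : ∀ x ∈ S, HasDerivAt η (η x * (b x / a x)) x := by
    intro x hx
    have hii : IntervalIntegrable (fun s => b s / a s) volume (1/2) x :=
      intervalIntegrable_iff.2 (hba.mono_set (hsubΙ x hx))
    have h1 : HasDerivAt (fun y => ∫ s in (1/2:ℝ)..y, b s / a s) (b x / a x) x :=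
      intervalIntegral.integral_hasDerivAt_right hii
        ⟨S, hSnhds x hx, hbaS.aestronglyMeasurable hSopen.measurableSet⟩
        (hbaS.continuousAt (hSnhds x hx))
    have h2 := h1.exp
    have hfun : η = fun y => Real.exp (∫ s in (1/2:ℝ)..y, b s / a s) := funext hη
    rw [hfun]
    exact h2
  have hη_cont : ContinuousOn η S := fun x hx => ((hηd x hx).continuousAt).continuousWithinAt
  have hv_cont : ContinuousOn (fun t => η t * u' t) S :=
    fun x hx => ((hw x hx).continuousAt).continuousWithinAt
  have hu'fun : (fun y => (η y * u' y) / η y) = u' := by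
    funext t
    rw [mul_comm, mul_div_assoc, div_self (hηpos t).ne', mul_one]
  have hu'_cont : ContinuousOn u' S := by
    rw [← hu'fun]
    exact hv_cont.div hη_cont fun x hx => (hηpos x).ne'
  have hu'd : ∀ x ∈ S, HasDerivAt u' (w x / η x - u' x * (b x / a x)) x := by
    intro x hx
    have h := (hw x hx).div (hηd x hx) (hηpos x).ne'
    rw [show ((fun t => η t * u' t) / η) = u' from hu'fun] at h
    refine h.congr_deriv ?_
    field_simp [(hηpos x).ne', (haS x hx).ne']
  set z : ℝ → ℝ := fun t => t * η t * u' t ^ 2 with hzdef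
  set z' : ℝ → ℝ := fun t =>
    η t * u' t ^ 2 + 2 * t * u' t * w t - t * (b t / a t) * (η t * u' t ^ 2) with hz'def
  have hzd : ∀ x ∈ S, HasDerivAt z (z' x) x := by
    intro x hx
    have h := ((hasDerivAt_id x).mul (hηd x hx)).mul ((hu'd x hx).pow 2)
    refine HasDerivAt.congr_deriv (f := z) h ?_
    have hη0 := (hηpos x).ne'
    have ha0' := (haS x hx).ne'
    simp only [hz'def, id_eq, pow_one, Nat.cast_ofNat, Pi.mul_apply, Pi.pow_apply]
    field_simp [(hηpos x).ne', (haS x hx).ne']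
    ring
  -- the small interval
  set c : ℝ := min δ 1 / 2 with hc
  have hmin : 0 < min δ 1 := lt_min hδpos one_pos
  have hc0 : 0 < c := by positivity
  have hcδ : c < δ := lt_of_lt_of_le (half_lt_self hmin) (min_le_left _ _)
  have hc1 : c < 1 := lt_of_lt_of_le (half_lt_self hmin) (min_le_right _ _)
  have hcS : c ∈ Ioo (0:ℝ) δ := ⟨hc0, hcδ⟩
  set C : ℝ := c ^ K₁ / a c with hCdef
  have hacpos : 0 < a c := ha_pos c ⟨hc0, hc1.le⟩
  have hCpos : 0 < C := div_pos (Real.rpow_pos_of_pos hc0 _) hacpos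
  have hxa : ∀ x ∈ Ioo (0:ℝ) c, x ^ K₁ / a x ≤ C := fun x hx =>
    hmon ⟨hx.1, hx.2.trans hcδ⟩ hcS hx.2.le
  have hx1a : ∀ x ∈ Ioo (0:ℝ) c, x / a x ≤ C := by
    intro x hx
    have hx0 := hx.1
    have hax := ha_pos x ⟨hx0, (hx.2.trans hc1).le⟩
    have hxle1 : x ≤ 1 := (hx.2.trans hc1).le
    have h1 : x / a x = x ^ ((1:ℝ) - K₁) * (x ^ K₁ / a x) := by
      rw [← mul_div_assoc, ← Real.rpow_add hx0, sub_add_cancel, Real.rpow_one]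
    have h2 : x ^ ((1:ℝ) - K₁) ≤ 1 :=
      Real.rpow_le_one hx0.le hxle1 (by linarith)
    rw [h1]
    calc x ^ ((1:ℝ) - K₁) * (x ^ K₁ / a x) ≤ 1 * (x ^ K₁ / a x) := by
          apply mul_le_mul_of_nonneg_right h2
          positivity
      _ = x ^ K₁ / a x := one_mul _
      _ ≤ C := hxa x hx
  have hx2a : ∀ x ∈ Ioo (0:ℝ) c, x ^ 2 / a x ≤ C := by
    intro x hx
    have hx0 := hx.1
    have hax := ha_pos x ⟨hx0, (hx.2.trans hc1).le⟩
    have hxle1 : x ≤ 1 := (hx.2.trans hc1).le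
    have hxnat : x ^ (2:ℕ) = x ^ ((2:ℝ)) := by
      rw [← Real.rpow_natCast x 2]
      norm_num
    have h1 : x ^ 2 / a x = x ^ ((2:ℝ) - K₁) * (x ^ K₁ / a x) := by
      rw [hxnat, ← mul_div_assoc, ← Real.rpow_add hx0, sub_add_cancel]
    have h2 : x ^ ((2:ℝ) - K₁) ≤ 1 :=
      Real.rpow_le_one hx0.le hxle1 (by linarith [hK₁.2])
    rw [h1]
    calc x ^ ((2:ℝ) - K₁) * (x ^ K₁ / a x) ≤ 1 * (x ^ K₁ / a x) := by
          apply mul_le_mul_of_nonneg_right h2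
          positivity
      _ = x ^ K₁ / a x := one_mul _
      _ ≤ C := hxa x hx
  obtain ⟨B, hB⟩ := isCompact_Icc.exists_bound_of_continuousOn hb_cont
  have hB0 : 0 ≤ B := le_trans (norm_nonneg _) (hB 0 (left_mem_Icc.2 zero_le_one))
  -- integrability of z' on (0, c)
  set T : Set ℝ := Ioo (0:ℝ) c with hT
  have hTS : T ⊆ S := Ioo_subset_Ioo le_rfl hc1.le
  have hTmeas : MeasurableSet T := measurableSet_Ioo
  have hu'2int : IntegrableOn (fun x => u' x ^ 2) T := hu'L2.mono_set hTS
  have hAuT : IntegrableOn (fun x => (σ x * w x) ^ 2 / σ x) T := hAu.mono_set hTS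
  have hσpos : ∀ x ∈ S, 0 < σ x := fun x hx => by
    rw [hσ]; exact div_pos (haS x hx) (hηpos x)
  set g : ℝ → ℝ := fun x =>
    (Real.exp M * (1 + B * C) + 1) * u' x ^ 2
      + (C * Real.exp M) * ((σ x * w x) ^ 2 / σ x) with hg
  have hg_int : IntegrableOn g T := (hu'2int.const_mul _).add (hAuT.const_mul _)
  have hw_meas : AEStronglyMeasurable w (volume.restrict T) := by
    have h1 : Measurable (deriv fun t => η t * u' t) := measurable_deriv _
    refine h1.aestronglyMeasurable.congr ?_
    refine (ae_restrict_iff' hTmeas).2 (ae_of_all _ fun x hx => ?_)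
    exact (hw x (hTS hx)).deriv
  have hcontT : ∀ {f : ℝ → ℝ}, ContinuousOn f S → AEStronglyMeasurable f (volume.restrict T) :=
    fun hf => (hf.mono hTS).aestronglyMeasurable hTmeas
  have hz'meas : AEStronglyMeasurable z' (volume.restrict T) := by
    have m1 : AEStronglyMeasurable (fun x => η x * u' x ^ 2) (volume.restrict T) :=
      hcontT (hη_cont.mul (hu'_cont.pow 2))
    have m2 : AEStronglyMeasurable (fun x => 2 * x * u' x) (volume.restrict T) :=
      hcontT ((continuousOn_const.mul continuousOn_id).mul hu'_cont)
    have m3 : AEStronglyMeasurable (fun x => x * (b x / a x) * (η x * u' x ^ 2))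
        (volume.restrict T) :=
      hcontT ((continuousOn_id.mul hbaS).mul (hη_cont.mul (hu'_cont.pow 2)))
    exact (m1.add (m2.mul hw_meas)).sub m3
  have hz'int : IntegrableOn z' T := by
    refine Integrable.mono' hg_int hz'meas ?_
    refine (ae_restrict_iff' hTmeas).2 (ae_of_all _ fun x hx => ?_)
    have hxS := hTS hx
    have hx0 : 0 < x := hx.1
    have hax : 0 < a x := haS x hxS
    have hηM : η x ≤ Real.exp M := hηle x hxS
    have hηx : 0 < η x := hηpos x
    have hσx : 0 < σ x := hσpos x hxS
    have b1 : |η x * u' x ^ 2| ≤ Real.exp M * u' x ^ 2 := by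
      rw [abs_of_nonneg (by positivity)]
      exact mul_le_mul_of_nonneg_right hηM (sq_nonneg _)
    have key : (σ x * w x) ^ 2 / σ x = σ x * w x ^ 2 := by
      field_simp
    have hσw : σ x * w x ^ 2 = a x * w x ^ 2 / η x := by
      rw [hσ]; ring
    have b2 : |2 * x * u' x * w x| ≤ u' x ^ 2 + C * Real.exp M * ((σ x * w x) ^ 2 / σ x) := by
      have e2 : |2 * x * u' x * w x| = 2 * |u' x| * (x * |w x|) := by
        rw [abs_mul, abs_mul, abs_mul, abs_of_pos hx0, abs_of_nonneg (by norm_num : (0:ℝ) ≤ 2)]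
        ring
      have amgm : 2 * |u' x| * (x * |w x|) ≤ |u' x| ^ 2 + (x * |w x|) ^ 2 :=
        two_mul_le_add_sq _ _
      have e3 : |u' x| ^ 2 = u' x ^ 2 := sq_abs _
      have e4 : (x * |w x|) ^ 2 = x ^ 2 * w x ^ 2 := by
        rw [mul_pow, sq_abs]
      have b5 : x ^ 2 * w x ^ 2 ≤ C * Real.exp M * ((σ x * w x) ^ 2 / σ x) := by
        rw [key]
        have h6 : x ^ 2 * w x ^ 2 = (x ^ 2 / a x) * (a x * w x ^ 2) := by
          field_simp
        have h7 : (x ^ 2 / a x) * (a x * w x ^ 2) ≤ C * (a x * w x ^ 2) :=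
          mul_le_mul_of_nonneg_right (hx2a x hx) (by positivity)
        have h8 : a x * w x ^ 2 = η x * (σ x * w x ^ 2) := by
          rw [hσ]; field_simp
        have h9 : η x * (σ x * w x ^ 2) ≤ Real.exp M * (σ x * w x ^ 2) :=
          mul_le_mul_of_nonneg_right hηM (by positivity)
        calc x ^ 2 * w x ^ 2 = (x ^ 2 / a x) * (a x * w x ^ 2) := h6
          _ ≤ C * (a x * w x ^ 2) := h7
          _ = C * (η x * (σ x * w x ^ 2)) := by rw [h8]
          _ ≤ C * (Real.exp M * (σ x * w x ^ 2)) :=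
              mul_le_mul_of_nonneg_left h9 hCpos.le
          _ = C * Real.exp M * (σ x * w x ^ 2) := by ring
      calc |2 * x * u' x * w x| = 2 * |u' x| * (x * |w x|) := e2
        _ ≤ |u' x| ^ 2 + (x * |w x|) ^ 2 := amgm
        _ = u' x ^ 2 + x ^ 2 * w x ^ 2 := by rw [e3, e4]
        _ ≤ u' x ^ 2 + C * Real.exp M * ((σ x * w x) ^ 2 / σ x) := by linarith
    have b3 : |x * (b x / a x) * (η x * u' x ^ 2)| ≤ C * B * (Real.exp M * u' x ^ 2) := by
      have e5 : |x * (b x / a x) * (η x * u' x ^ 2)|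
          = (x / a x) * |b x| * (η x * u' x ^ 2) := by
        rw [abs_mul, abs_mul, abs_div, abs_of_pos hx0, abs_of_pos hax,
          abs_of_nonneg (by positivity : (0:ℝ) ≤ η x * u' x ^ 2)]
        ring
      rw [e5]
      have hb' : |b x| ≤ B := by
        have := hB x (Icc_subset_Icc le_rfl hc1.le (Ioo_subset_Icc_self hx))
        rwa [Real.norm_eq_abs] at this
      have h1 : η x * u' x ^ 2 ≤ Real.exp M * u' x ^ 2 :=
        mul_le_mul_of_nonneg_right hηM (sq_nonneg _)
      calc (x / a x) * |b x| * (η x * u' x ^ 2)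
          ≤ C * B * (η x * u' x ^ 2) := by
            apply mul_le_mul_of_nonneg_right _ (by positivity)
            exact mul_le_mul (hx1a x hx) hb' (abs_nonneg _) hCpos.le
        _ ≤ C * B * (Real.exp M * u' x ^ 2) :=
            mul_le_mul_of_nonneg_left h1 (by positivity)
    have tri : |z' x| ≤ |η x * u' x ^ 2| + |2 * x * u' x * w x|
        + |x * (b x / a x) * (η x * u' x ^ 2)| := by
      simp only [hz'def]
      calc |η x * u' x ^ 2 + 2 * x * u' x * w x - x * (b x / a x) * (η x * u' x ^ 2)|
          ≤ |η x * u' x ^ 2 + 2 * x * u' x * w x|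
            + |x * (b x / a x) * (η x * u' x ^ 2)| := abs_sub _ _
        _ ≤ |η x * u' x ^ 2| + |2 * x * u' x * w x|
            + |x * (b x / a x) * (η x * u' x ^ 2)| := by
              have := abs_add_le (η x * u' x ^ 2) (2 * x * u' x * w x)
              linarith
    have hgx : g x = (Real.exp M * (1 + B * C) + 1) * u' x ^ 2
        + (C * Real.exp M) * ((σ x * w x) ^ 2 / σ x) := rfl
    rw [Real.norm_eq_abs, hgx]
    have hring : (Real.exp M * (1 + B * C) + 1) * u' x ^ 2
        = Real.exp M * u' x ^ 2 + u' x ^ 2 + C * B * (Real.exp M * u' x ^ 2) := by ring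
    linarith [tri, b1, b2, b3]
  -- the primitive is continuous up to 0
  have hz_cont : ContinuousOn z S := fun x hx => ((hzd x hx).continuousAt).continuousWithinAt
  have hz'int_Icc : IntegrableOn z' (Icc 0 c) := by
    rw [integrableOn_Icc_iff_integrableOn_Ioo]
    exact hz'int
  have hGcont : ContinuousOn (fun x => ∫ t in x..c, z' t) (Icc 0 c) := by
    have h := intervalIntegral.continuousOn_primitive_interval_left
      (f := z') (μ := volume) (a := 0) (b := c) (by rwa [uIcc_of_le hc0.le])
    rwa [uIcc_of_le hc0.le] at h
  have hzeq : ∀ x ∈ T, z x = z c - ∫ t in x..c, z' t := by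
    intro x hx
    have hxc : x ≤ c := hx.2.le
    have h1 : ∫ t in x..c, z' t = z c - z x := by
      apply intervalIntegral.integral_eq_sub_of_hasDerivAt_of_le hxc
      · exact hz_cont.mono (fun t ht => ⟨lt_of_lt_of_le hx.1 ht.1, lt_of_le_of_lt ht.2 hc1⟩)
      · intro t ht
        exact hzd t ⟨lt_trans hx.1 ht.1, lt_trans ht.2 hc1⟩
      · exact (hz'int_Icc.mono_set (Icc_subset_Icc hx.1.le le_rfl) |>.mono_set
          (by rw [uIcc_of_le hxc])).intervalIntegrable
    linarith [h1]
  set L : ℝ := z c - ∫ t in (0:ℝ)..c, z' t with hL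
  have hzL : Tendsto z (𝓝[>] (0:ℝ)) (𝓝 L) := by
    have h2 : ContinuousWithinAt (fun x => ∫ t in x..c, z' t) (Icc 0 c) 0 :=
      hGcont 0 (left_mem_Icc.2 hc0.le)
    have h3 : 𝓝[>] (0:ℝ) = 𝓝[T] 0 := (nhdsWithin_Ioo_eq_nhdsGT hc0).symm
    have h1 : Tendsto (fun x => ∫ t in x..c, z' t) (𝓝[>] (0:ℝ))
        (𝓝 (∫ t in (0:ℝ)..c, z' t)) := by
      rw [h3]
      exact h2.tendsto.mono_left (nhdsWithin_mono _ Ioo_subset_Icc_self)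
    have h4 : Tendsto (fun x => z c - ∫ t in x..c, z' t) (𝓝[>] (0:ℝ)) (𝓝 L) :=
      tendsto_const_nhds.sub h1
    refine h4.congr' ?_
    filter_upwards [Ioo_mem_nhdsGT hc0] with x hx
    exact (hzeq x hx).symm
  have hznn : ∀ᶠ x in 𝓝[>] (0:ℝ), 0 ≤ z x := by
    filter_upwards [Ioo_mem_nhdsGT hc0] with x hx
    exact mul_nonneg (mul_nonneg hx.1.le (hηpos x).le) (sq_nonneg _)
  have hL0 : 0 ≤ L := ge_of_tendsto hzL hznn
  have hLzero : L = 0 := by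
    by_contra hne
    have hLpos : 0 < L := lt_of_le_of_ne hL0 (Ne.symm hne)
    have hev : ∀ᶠ x in 𝓝[>] (0:ℝ), L / 2 < z x :=
      hzL.eventually (eventually_gt_nhds (half_lt_self hLpos))
    obtain ⟨ε, hε, hsub2⟩ := mem_nhdsGT_iff_exists_Ioc_subset.1 hev
    set ε' : ℝ := min ε c with hε'def
    have hε'0 : 0 < ε' := lt_min hε hc0
    have hε'c : ε' ≤ c := min_le_right _ _
    have hsubT : Ioo (0:ℝ) ε' ⊆ T := Ioo_subset_Ioo le_rfl hε'c
    have hub : ∀ x ∈ Ioo (0:ℝ) ε', L / 2 * x⁻¹ ≤ η x * u' x ^ 2 := by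
      intro x hx
      have hx0 : 0 < x := hx.1
      have hxz : L / 2 < z x :=
        hsub2 ⟨hx.1, hx.2.le.trans (min_le_left _ _)⟩
      have h5 : L / 2 * x⁻¹ ≤ z x * x⁻¹ :=
        mul_le_mul_of_nonneg_right hxz.le (inv_nonneg.2 hx0.le)
      calc L / 2 * x⁻¹ ≤ z x * x⁻¹ := h5
        _ = η x * u' x ^ 2 := by
            simp only [hzdef]
            field_simp
    have hint1 : IntegrableOn (fun x => η x * u' x ^ 2) (Ioo 0 ε') := by
      refine Integrable.mono'
        ((hu'L2.mono_set (fun t ht => hTS (hsubT ht))).const_mul (Real.exp M))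
        (((hη_cont.mul (hu'_cont.pow 2)).mono (fun t ht => hTS (hsubT ht))).aestronglyMeasurable
          measurableSet_Ioo) ?_
      refine (ae_restrict_iff' measurableSet_Ioo).2 (ae_of_all _ fun x hx => ?_)
      have hxS := hTS (hsubT hx)
      rw [Real.norm_eq_abs, abs_of_nonneg (mul_nonneg (hηpos x).le (sq_nonneg _))]
      exact mul_le_mul_of_nonneg_right (hηle x hxS) (sq_nonneg _)
    have hint2 : IntegrableOn (fun x : ℝ => L / 2 * x⁻¹) (Ioo 0 ε') := by
      refine Integrable.mono' hint1
        ((continuousOn_const.mul (continuousOn_inv₀.mono (fun t ht => ht.1.ne')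
          )).aestronglyMeasurable measurableSet_Ioo) ?_
      refine (ae_restrict_iff' measurableSet_Ioo).2 (ae_of_all _ fun x hx => ?_)
      rw [Real.norm_eq_abs, abs_of_nonneg
        (mul_nonneg (by linarith : (0:ℝ) ≤ L / 2) (inv_nonneg.2 hx.1.le))]
      exact hub x hx
    have hint3 : IntegrableOn (fun x : ℝ => x⁻¹) (Ioo 0 ε') := by
      have h := hint2.const_mul (2 / L)
      refine h.congr ?_
      refine (ae_restrict_iff' measurableSet_Ioo).2 (ae_of_all _ fun x hx => ?_)
      have hL' : L ≠ 0 := hLpos.ne'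
      have hx0 : x ≠ 0 := hx.1.ne'
      field_simp
    have hii : IntervalIntegrable (fun x : ℝ => x⁻¹) volume 0 ε' := by
      rw [intervalIntegrable_iff_integrableOn_Ioo_of_le hε'0.le]
      exact hint3
    rw [intervalIntegrable_inv_iff] at hii
    rcases hii with h | h
    · exact hε'0.ne h
    · exact h (by rw [uIcc_of_le hε'0.le]; exact left_mem_Icc.2 hε'0.le)
  rw [hLzero] at hzL
  have hfinal : Tendsto (fun x => Real.exp M * z x) (𝓝[>] (0:ℝ)) (𝓝 0) := by
    have := hzL.const_mul (Real.exp M)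
    simpa using this
  refine squeeze_zero' ?_ ?_ hfinal
  · filter_upwards [Ioo_mem_nhdsGT hc0] with x hx
    exact mul_nonneg hx.1.le (sq_nonneg _)
  · filter_upwards [Ioo_mem_nhdsGT hc0] with x hx
    have hxS := hTS hx
    have h1 : (1:ℝ) ≤ Real.exp M * η x := by
      have h2 := hηge x hxS
      calc (1:ℝ) = Real.exp M * Real.exp (-M) := by rw [← Real.exp_add]; simp
        _ ≤ Real.exp M * η x := mul_le_mul_of_nonneg_left h2 (Real.exp_pos M).le
    calc x * u' x ^ 2 = 1 * (x * u' x ^ 2) := (one_mul _).symm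
      _ ≤ (Real.exp M * η x) * (x * u' x ^ 2) :=
          mul_le_mul_of_nonneg_right h1 (mul_nonneg hx.1.le (sq_nonneg _))
      _ = Real.exp M * z x := by simp only [hzdef]; ring
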